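/- Let b ≥ 4 be a real number and define the sequence (x_t)_{t≥0} by x_0 = 1 and x_t = 4·x_{t−1}·b^{5^t·x_{t−1}} for t ≥ 1. Then for every t ≥ 0 one has x_t ≤ tower_{10b}(t+1) / 10^{t+1}. -/

import Mathlib

/-- Tower function: `tower a 1 = a`, `tower a (j+1) = a ^ tower a j` (real exponentiation). -/
noncomputable def tower (a : ℝ) : ℕ → ℝ
  | 0 => 1
  | j + 1 => a ^ tower a j

theorem stmt_0 (b : ℝ) (hb : 4 ≤ b) (x : ℕ → ℝ)
    (hx0 : x 0 = 1)
    (hx : ∀ t : ℕ, 1 ≤ t → x t = 4 * x (t - 1) * b ^ ((5 : ℝ) ^ t * x (t - 1))) :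
    ∀ t : ℕ, x t ≤ tower (10 * b) (t + 1) / 10 ^ (t + 1) := by
  have hb0 : (0:ℝ) < b := by linarith
  have hb1 : (1:ℝ) ≤ b := by linarith
  have htow1 : ∀ j, 1 ≤ tower (10*b) j := by
    intro j
    induction j with
    | zero => simp [tower]
    | succ j ih =>
      rw [tower]
      calc (1:ℝ) = (10*b) ^ (0:ℝ) := by rw [Real.rpow_zero]
        _ ≤ (10*b) ^ (tower (10*b) j) :=
            Real.rpow_le_rpow_of_exponent_le (by linarith) (by linarith)
  have htow40 : ∀ j, 40 ≤ tower (10*b) (j+1) := by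
    intro j
    rw [tower]
    calc (40:ℝ) ≤ (10*b) ^ (1:ℝ) := by rw [Real.rpow_one]; linarith
      _ ≤ _ := Real.rpow_le_rpow_of_exponent_le (by linarith) (htow1 j)
  have hxpos : ∀ t, 0 < x t := by
    intro t
    induction t with
    | zero => rw [hx0]; norm_num
    | succ t ih =>
      have h := hx (t+1) (by omega)
      simp only [Nat.add_sub_cancel] at h
      rw [h]
      positivity
  intro t
  induction t with
  | zero =>
    rw [hx0]
    simp only [tower, Real.rpow_one]
    rw [le_div_iff₀ (by positivity)]
    norm_num
    linarith
  | succ t ih =>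
    have ht1 : x (t+1) = 4 * x t * b ^ ((5:ℝ)^(t+1) * x t) := by
      have h := hx (t+1) (by omega)
      simpa using h
    set T := tower (10*b) (t+1) with hT
    have hT1 : 1 ≤ T := htow1 _
    have hT40 : 40 ≤ T := htow40 _
    have hxt := hxpos t
    have hPpos : (0:ℝ) < 10 ^ (t+1) := by positivity
    have hexp : (5:ℝ)^(t+1) * x t ≤ T/2 := by
      have h1 : (5:ℝ)^(t+1) * x t ≤ (5:ℝ)^(t+1) * (T / 10^(t+1)) :=
        mul_le_mul_of_nonneg_left ih (by positivity)
      have h2 : (5:ℝ)^(t+1) * (T / 10^(t+1)) = T * ((1:ℝ)/2)^(t+1) := by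
        rw [show ((1:ℝ)/2) = 5/10 by norm_num, div_pow]
        field_simp
      have h3 : ((1:ℝ)/2)^(t+1) ≤ (1:ℝ)/2 := by
        calc ((1:ℝ)/2)^(t+1) ≤ ((1:ℝ)/2)^1 :=
              pow_le_pow_of_le_one (by norm_num) (by norm_num) (by omega)
          _ = 1/2 := pow_one _
      calc (5:ℝ)^(t+1) * x t ≤ T * ((1:ℝ)/2)^(t+1) := by rw [← h2]; exact h1
        _ ≤ T * (1/2) := mul_le_mul_of_nonneg_left h3 (by linarith)
        _ = T/2 := by ring
    have hbexp : b ^ ((5:ℝ)^(t+1) * x t) ≤ b ^ (T/2) :=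
      Real.rpow_le_rpow_of_exponent_le hb1 hexp
    set B := b ^ (T/2) with hB
    have hBpos : 0 < B := Real.rpow_pos_of_pos hb0 _
    have hB16 : 16 ≤ B := by
      have h4 : (4:ℝ) ^ ((2:ℝ)) ≤ (4:ℝ) ^ (T/2) :=
        Real.rpow_le_rpow_of_exponent_le (by norm_num) (by linarith)
      have h5 : (4:ℝ) ^ (T/2) ≤ b ^ (T/2) :=
        Real.rpow_le_rpow (by norm_num) hb (by linarith)
      have h6 : (4:ℝ) ^ ((2:ℝ)) = 16 := by
        rw [show (2:ℝ) = ((2:ℕ):ℝ) by norm_num, Real.rpow_natCast]; norm_num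
      linarith
    have hBern : 1 + 9 * T ≤ (10:ℝ) ^ T := by
      have := one_add_mul_self_le_rpow_one_add (by norm_num : (-1:ℝ) ≤ 9) hT1
      norm_num at this
      calc 1 + 9*T = 1 + T*9 := by ring
        _ ≤ (10:ℝ)^T := this
    have h10Tpos : (0:ℝ) < (10:ℝ) ^ T := Real.rpow_pos_of_pos (by norm_num) _
    have key : 40 * T * B ≤ (10:ℝ)^T * (B * B) := by
      nlinarith [mul_le_mul_of_nonneg_right hBern (le_of_lt hBpos),
        mul_le_mul_of_nonneg_left hB16 (le_of_lt h10Tpos)]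
    have hsplit : tower (10*b) (t+2) = (10:ℝ)^T * (B * B) := by
      show (10*b) ^ T = _
      rw [Real.mul_rpow (by norm_num) (le_of_lt hb0), hB, ← Real.rpow_add hb0]
      norm_num
    calc x (t+1) = 4 * x t * b ^ ((5:ℝ)^(t+1) * x t) := ht1
      _ ≤ 4 * (T / 10^(t+1)) * B := by
          apply mul_le_mul (mul_le_mul_of_nonneg_left ih (by norm_num)) hbexp
            (Real.rpow_nonneg (le_of_lt hb0) _) (by positivity)
      _ ≤ tower (10*b) (t+1+1) / 10 ^ (t+1+1) := by
          rw [show t+1+1 = t+2 from rfl, hsplit,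
            show 4 * (T / 10^(t+1)) * B = (4*T*B) / 10^(t+1) by ring,
            div_le_div_iff₀ (by positivity) (by positivity)]
          have h8 : (10:ℝ)^(t+2) = 10 * 10^(t+1) := by ring
          rw [h8]
          nlinarith [mul_le_mul_of_nonneg_right key (le_of_lt hPpos)]
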